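/- (Perfect recovery by the regularized decoder in the noiseless case.) Under the stated hypotheses, if in addition e = 0 (so that y_i = (π_{A,T}(x))(s(i)) for all i) and g(σ_k) = 0, then every minimizer x* over ℝ^n of x̃ ↦ ‖Φ π_{A,T}(x̃) − D y‖₂² + γ x̃ᵀGx̃ satisfies x* = x. -/
import Mathlib


open scoped BigOperators Matrix

/-- `f_T(λ) = √(Σ_{t=0}^{T-1} λ^{2t})`. -/
noncomputable def fT (T : ℕ) (l : ℝ) : ℝ := Real.sqrt (∑ t ∈ Finset.range T, l ^ (2 * t))

/-- perfect recovery of the regularized decoder in the noiseless case.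
Same setting as Theorem 5.2: `(π_{A,T}(x))(t,i) = (A^t x)(i)`, `(Φ v)_i = d_i v(s(i))`,
`A = Σ_j λ_j u_j u_jᵀ`, `G = Σ_j g(σ_j) u_j u_jᵀ`; `σ_k, σ_{k+1}` are
`sig ⟨k-1⟩, sig ⟨k⟩` in 0-based indexing.  If `e = 0` (i.e.
`y_i = (π_{A,T}(x))(s(i))`) and `g(σ_k) = 0`, then every minimizer `x*` over `ℝ^n`
of `x̃ ↦ ‖Φπ_{A,T}(x̃) − Dy‖₂² + γ x̃ᵀGx̃` satisfies `x* = x`. -/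
theorem stmt16 (n k T M : ℕ) (hn : 0 < n) (hk : 0 < k) (hT : 0 < T) (hkn : k < n)
    (hM : 0 < M)
    (u : Fin n → Fin n → ℝ)
    (hu : ∀ i j : Fin n, ∑ a, u i a * u j a = if i = j then 1 else 0)
    (lam : Fin n → ℝ)
    (hmono : ∀ i j : Fin n, i ≤ j → lam j ≤ lam i)
    (hnn : ∀ j, 0 ≤ lam j)
    (sig : Fin n → ℝ) (hsig : ∀ i j : Fin n, i ≤ j → sig i ≤ sig j)
    (A : Matrix (Fin n) (Fin n) ℝ)
    (hAdef : ∀ a b, A a b = ∑ j, lam j * u j a * u j b)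
    (g : ℝ → ℝ) (hg0 : ∀ j, 0 ≤ g (sig j))
    (hgmono : ∀ i j : Fin n, i ≤ j → g (sig i) ≤ g (sig j))
    (hgk1 : 0 < g (sig ⟨k, hkn⟩))
    (G : Matrix (Fin n) (Fin n) ℝ)
    (hGdef : ∀ a b, G a b = ∑ j, g (sig j) * u j a * u j b)
    (s : Fin M → Fin T × Fin n) (d : Fin M → ℝ) (hd : ∀ i, 0 < d i)
    (γ : ℝ) (hγ : 0 < γ) (δ : ℝ) (hδ0 : 0 < δ) (hδ1 : δ < 1)
    (Mmax : ℝ) (hMmax : 0 < Mmax)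
    (hMbd : ∀ v : Fin T × Fin n → ℝ,
      Real.sqrt (∑ i, (d i * v (s i)) ^ 2) ≤ Mmax * Real.sqrt (∑ q, v q ^ 2))
    (hframe : ∀ v ∈ Submodule.span ℝ
        (Set.range fun j : Fin k => u (Fin.castLE hkn.le j)),
      Real.sqrt (1 - δ) * fT T (lam ⟨k - 1, by omega⟩) * Real.sqrt (∑ a, v a ^ 2)
        ≤ Real.sqrt (∑ i, (d i * ((A ^ ((s i).1 : ℕ)).mulVec v) (s i).2) ^ 2))
    (x : Fin n → ℝ)
    (hx : x ∈ Submodule.span ℝ (Set.range fun j : Fin k => u (Fin.castLE hkn.le j)))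
    (y : Fin M → ℝ)
    (hy : ∀ i, y i = ((A ^ ((s i).1 : ℕ)).mulVec x) (s i).2)
    (hgk : g (sig ⟨k - 1, by omega⟩) = 0)
    (xstar : Fin n → ℝ)
    (hmin : ∀ z : Fin n → ℝ,
      (∑ i, (d i * ((A ^ ((s i).1 : ℕ)).mulVec xstar) (s i).2 - d i * y i) ^ 2)
          + γ * ∑ a, xstar a * G.mulVec xstar a
        ≤ (∑ i, (d i * ((A ^ ((s i).1 : ℕ)).mulVec z) (s i).2 - d i * y i) ^ 2)
          + γ * ∑ a, z a * G.mulVec z a) :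
    xstar = x := by
  classical
  set P := Submodule.span ℝ (Set.range fun j : Fin k => u (Fin.castLE hkn.le j)) with hP
  -- coefficient map
  set c : Fin n → (Fin n → ℝ) → ℝ := fun j v => ∑ a, u j a * v a with hc
  -- completeness relation: ∑ j, u j a * u j b = δ_{ab}
  have compl : ∀ a b : Fin n, (∑ j, u j a * u j b) = if a = b then 1 else 0 := by
    have hU : (Matrix.of u) * (Matrix.of u)ᵀ = 1 := by
      ext i j
      simp only [Matrix.mul_apply, Matrix.transpose_apply, Matrix.of_apply, Matrix.one_apply]
      exact hu i j
    have hU2 : (Matrix.of u)ᵀ * (Matrix.of u) = 1 := mul_eq_one_comm.mp hU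
    intro a b
    have := congrFun (congrFun hU2 a) b
    simpa [Matrix.mul_apply, Matrix.transpose_apply, Matrix.of_apply, Matrix.one_apply]
      using this
  -- expansion: v a = ∑ j, c j v * u j a
  have expand : ∀ (v : Fin n → ℝ) (a : Fin n), v a = ∑ j, c j v * u j a := by
    intro v a
    have : ∑ j, c j v * u j a = ∑ b, (∑ j, u j a * u j b) * v b := by
      simp only [hc, Finset.sum_mul, Finset.mul_sum]
      rw [Finset.sum_comm]
      apply Finset.sum_congr rfl; intro j _
      apply Finset.sum_congr rfl; intro b _
      ring
    rw [this]
    simp [compl]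
  -- quadratic form
  have quad : ∀ v : Fin n → ℝ,
      ∑ a, v a * G.mulVec v a = ∑ j, g (sig j) * (c j v) ^ 2 := by
    intro v
    simp only [Matrix.mulVec, dotProduct, hGdef, hc]
    have : ∑ a, v a * ∑ b, (∑ j, g (sig j) * u j a * u j b) * v b
        = ∑ a, ∑ b, ∑ j, g (sig j) * (u j a * v a) * (u j b * v b) := by
      apply Finset.sum_congr rfl; intro a _
      rw [Finset.mul_sum]
      apply Finset.sum_congr rfl; intro b _
      rw [Finset.sum_mul, Finset.mul_sum]
      apply Finset.sum_congr rfl; intro j _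
      ring
    rw [this]
    have step : ∀ a : Fin n, (∑ b, ∑ j, g (sig j) * (u j a * v a) * (u j b * v b))
        = ∑ j, ∑ b, g (sig j) * (u j a * v a) * (u j b * v b) := fun a => Finset.sum_comm
    simp only [step]
    rw [Finset.sum_comm]
    apply Finset.sum_congr rfl; intro j _
    rw [pow_two, Finset.sum_mul_sum, Finset.mul_sum]
    apply Finset.sum_congr rfl; intro a _
    rw [Finset.mul_sum]
    apply Finset.sum_congr rfl; intro b _
    ring
  -- coefficients of span members vanish for j ≥ k
  have coeff_zero : ∀ v ∈ P, ∀ j : Fin n, k ≤ (j : ℕ) → c j v = 0 := by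
    intro v hv j hj
    induction hv using Submodule.span_induction with
    | mem w hw =>
      obtain ⟨i, rfl⟩ := hw
      have hne : j ≠ Fin.castLE hkn.le i := by
        intro h
        have : (j : ℕ) = (i : ℕ) := by rw [h]; rfl
        omega
      simpa [hc, hne] using hu j (Fin.castLE hkn.le i)
    | zero => simp [hc]
    | add w₁ w₂ _ _ h1 h2 =>
      simp only [hc] at h1 h2 ⊢
      simp [Pi.add_apply, mul_add, Finset.sum_add_distrib, h1, h2]
    | smul r w _ h1 =>
      simp only [hc] at h1 ⊢
      simp only [Pi.smul_apply, smul_eq_mul]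
      rw [show (∑ a, u j a * (r * w a)) = r * ∑ a, u j a * w a by
        rw [Finset.mul_sum]; apply Finset.sum_congr rfl; intro a _; ring]
      rw [h1, mul_zero]
  -- membership from vanishing high coefficients
  have mem_of_coeff : ∀ v : Fin n → ℝ, (∀ j : Fin n, k ≤ (j : ℕ) → c j v = 0) → v ∈ P := by
    intro v hv
    have hvsum : v = ∑ j, c j v • u j := by
      funext a
      rw [expand v a]
      simp [Finset.sum_apply]
    rw [hvsum]
    apply Submodule.sum_mem
    intro j _
    by_cases hj : (j : ℕ) < k
    · apply Submodule.smul_mem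
      apply Submodule.subset_span
      exact ⟨⟨(j : ℕ), hj⟩, by congr 1⟩
    · rw [hv j (by omega)]
      simp
  -- g vanishes below k, positive from k on
  have hgzero : ∀ j : Fin n, (j : ℕ) < k → g (sig j) = 0 := by
    intro j hj
    refine le_antisymm ?_ (hg0 j)
    rw [← hgk]
    exact hgmono j ⟨k - 1, by omega⟩ (by rw [Fin.le_def]; simpa using by omega)
  have hgpos : ∀ j : Fin n, k ≤ (j : ℕ) → 0 < g (sig j) := by
    intro j hj
    exact lt_of_lt_of_le hgk1 (hgmono ⟨k, hkn⟩ j (by rw [Fin.le_def]; simpa using hj))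
  -- objective at x is zero
  have datax : (∑ i, (d i * ((A ^ ((s i).1 : ℕ)).mulVec x) (s i).2 - d i * y i) ^ 2) = 0 := by
    apply Finset.sum_eq_zero
    intro i _
    rw [hy i]
    ring
  have regx : (∑ a, x a * G.mulVec x a) = 0 := by
    rw [quad x]
    apply Finset.sum_eq_zero
    intro j _
    by_cases hj : (j : ℕ) < k
    · rw [hgzero j hj, zero_mul]
    · rw [coeff_zero x hx j (by omega)]
      ring
  have hobj := hmin x
  rw [datax, regx, mul_zero, add_zero] at hobj
  -- both parts of objective at xstar are nonneg, hence zero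
  have hd1 : 0 ≤ ∑ i, (d i * ((A ^ ((s i).1 : ℕ)).mulVec xstar) (s i).2 - d i * y i) ^ 2 :=
    Finset.sum_nonneg fun i _ => sq_nonneg _
  have hr1 : 0 ≤ ∑ a, xstar a * G.mulVec xstar a := by
    rw [quad xstar]
    exact Finset.sum_nonneg fun j _ => mul_nonneg (hg0 j) (sq_nonneg _)
  have hdz : (∑ i, (d i * ((A ^ ((s i).1 : ℕ)).mulVec xstar) (s i).2 - d i * y i) ^ 2) = 0 := by
    nlinarith
  have hrz : (∑ a, xstar a * G.mulVec xstar a) = 0 := by nlinarith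
  -- xstar has vanishing high coefficients
  have hcoef : ∀ j : Fin n, k ≤ (j : ℕ) → c j xstar = 0 := by
    intro j hj
    rw [quad xstar] at hrz
    have hterm := (Finset.sum_eq_zero_iff_of_nonneg
      (fun j _ => mul_nonneg (hg0 j) (sq_nonneg _))).mp hrz j (Finset.mem_univ j)
    have := hgpos j hj
    have hsq : (c j xstar) ^ 2 = 0 := by
      by_contra h
      exact h (by nlinarith [sq_nonneg (c j xstar)])
    exact pow_eq_zero_iff (n := 2) (by norm_num) |>.mp hsq
  have hxstarP : xstar ∈ P := mem_of_coeff xstar hcoef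
  have hsubP : xstar - x ∈ P := Submodule.sub_mem P hxstarP hx
  -- data fit is exact pointwise
  have hpt : ∀ i, d i * ((A ^ ((s i).1 : ℕ)).mulVec xstar) (s i).2 = d i * y i := by
    intro i
    have := (Finset.sum_eq_zero_iff_of_nonneg
      (fun i _ => sq_nonneg (d i * ((A ^ ((s i).1 : ℕ)).mulVec xstar) (s i).2 - d i * y i))).mp
      hdz i (Finset.mem_univ i)
    have h2 := pow_eq_zero_iff (n := 2) (by norm_num) |>.mp this
    linarith [sub_eq_zero.mp h2]
  -- apply frame bound to xstar - x
  have hdiff : (∑ i, (d i * ((A ^ ((s i).1 : ℕ)).mulVec (xstar - x)) (s i).2) ^ 2) = 0 := by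
    apply Finset.sum_eq_zero
    intro i _
    rw [Matrix.mulVec_sub]
    have h1 := hpt i
    have h2 := hy i
    simp only [Pi.sub_apply]
    rw [mul_sub]
    rw [h1, h2]
    ring
  have hfr := hframe (xstar - x) hsubP
  rw [hdiff, Real.sqrt_zero] at hfr
  have h1 : 0 < Real.sqrt (1 - δ) := Real.sqrt_pos.mpr (by linarith)
  have h2 : 0 < fT T (lam ⟨k - 1, by omega⟩) := by
    unfold fT
    apply Real.sqrt_pos.mpr
    have : (1 : ℝ) ≤ ∑ t ∈ Finset.range T, lam ⟨k - 1, by omega⟩ ^ (2 * t) := by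
      have h0 : (0 : ℕ) ∈ Finset.range T := Finset.mem_range.mpr hT
      have := Finset.single_le_sum
        (f := fun t => lam ⟨k - 1, by omega⟩ ^ (2 * t))
        (fun t _ => pow_nonneg (hnn _) _) h0
      simpa using this
    linarith
  have hsn : 0 ≤ Real.sqrt (∑ a, (xstar - x) a ^ 2) := Real.sqrt_nonneg _
  have hsz : Real.sqrt (∑ a, (xstar - x) a ^ 2) = 0 := by
    refine le_antisymm ?_ hsn
    by_contra h
    push_neg at h
    have := mul_pos (mul_pos h1 h2) h
    linarith
  have hSz : (∑ a, (xstar - x) a ^ 2) = 0 := by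
    have hnn : (0 : ℝ) ≤ ∑ a, (xstar - x) a ^ 2 := Finset.sum_nonneg fun a _ => sq_nonneg _
    have := Real.sqrt_eq_zero hnn |>.mp hsz
    exact this
  funext a
  have := (Finset.sum_eq_zero_iff_of_nonneg (fun a _ => sq_nonneg ((xstar - x) a))).mp
    hSz a (Finset.mem_univ a)
  have h2' := pow_eq_zero_iff (n := 2) (by norm_num) |>.mp this
  have : xstar a - x a = 0 := by simpa using h2'
  linarith
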